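/- Let A be a C*-algebra and let a, b be positive elements of A. If a ≾ b (Cuntz subequivalence), then d_τ(a) ≤ d_τ(b) for every lower semicontinuous tracial weight τ on A; consequently, if a ≈ b then d_τ(a) = d_τ(b) for every such τ. -/

import Mathlib

open Filter Topology

noncomputable section

variable {A : Type*}

/-- The hereditary subalgebra `A_a`: the norm-closure of `{a * x * a : x ∈ A}`. -/
def herSub [NonUnitalCStarAlgebra A] (a : A) : Set A :=
  closure {y : A | ∃ x : A, y = a * x * a}

/-- The right ideal `E_a`: the norm-closure of `{a * x : x ∈ A}`. -/
def rightIdeal [NonUnitalCStarAlgebra A] (a : A) : Set A :=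
  closure {y : A | ∃ x : A, y = a * x}

/-- Pedersen equivalence: `a = x* x` and `b = x x*` for some `x`. -/
def PedersenEquiv [NonUnitalCStarAlgebra A] (a b : A) : Prop :=
  ∃ x : A, a = star x * x ∧ b = x * star x

/-- Blackadar equivalence `a ∼ₛ b`: there is `x ∈ A` with `A_a = A_{x*x}` and `A_b = A_{xx*}`. -/
def BlackadarEquiv [NonUnitalCStarAlgebra A] (a b : A) : Prop :=
  ∃ x : A, herSub a = herSub (star x * x) ∧ herSub b = herSub (x * star x)

/-- Blackadar subequivalence `a ≾ₛ b`: there is a positive `a' ∈ A_b` with `a ∼ₛ a'`. -/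
def BlackadarLe [NonUnitalCStarAlgebra A] [PartialOrder A] (a b : A) : Prop :=
  ∃ a' : A, 0 ≤ a' ∧ a' ∈ herSub b ∧ BlackadarEquiv a a'

/-- Cuntz subequivalence `a ≾ b`: there is a sequence `xₙ` with `‖xₙ* b xₙ - a‖ → 0`. -/
def CuntzLe [NonUnitalCStarAlgebra A] (a b : A) : Prop :=
  ∃ x : ℕ → A, Tendsto (fun n => ‖star (x n) * b * x n - a‖) atTop (𝓝 0)

/-- Cuntz equivalence `a ≈ b`. -/
def CuntzEquiv [NonUnitalCStarAlgebra A] (a b : A) : Prop :=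
  CuntzLe a b ∧ CuntzLe b a

/-- Compact containment `a ⊂⊂ b`: there is a positive `e ∈ A_b` with `e * a = a`. -/
def CpctContained [NonUnitalCStarAlgebra A] [PartialOrder A] (a b : A) : Prop :=
  ∃ e : A, 0 ≤ e ∧ e ∈ herSub b ∧ e * a = a

open scoped ENNReal

variable [NonUnitalCStarAlgebra A] [PartialOrder A] [StarOrderedRing A]

/-- A lower semicontinuous tracial weight on a C*-algebra `A`: an additive, positively
homogeneous, tracial `[0, ∞]`-valued function on the positive cone which is lower
semicontinuous with respect to the norm topology on the positive cone. -/
structure IsTracialWeight (τ : A → ℝ≥0∞) : Prop where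
  additive : ∀ a b : A, 0 ≤ a → 0 ≤ b → τ (a + b) = τ a + τ b
  homogeneous : ∀ a : A, 0 ≤ a → ∀ r : ℝ, 0 ≤ r → τ (r • a) = ENNReal.ofReal r * τ a
  tracial : ∀ x : A, τ (star x * x) = τ (x * star x)
  lowerSemicontinuous : LowerSemicontinuousOn τ {a : A | 0 ≤ a}

/-- The function `f_ε`: `0` at `0`, equal to `1` on `[ε, ∞)`, and linear on `[0, ε]`. -/
def fEps (ε : ℝ) : ℝ → ℝ := fun t => min (t / ε) 1

/-- The dimension function `d_τ(a) = sup_{ε > 0} τ(f_ε(a))` associated to a tracial weight. -/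
def dimFn (τ : A → ℝ≥0∞) (a : A) : ℝ≥0∞ :=
  ⨆ (ε : ℝ) (_ : 0 < ε), τ (cfcₙ (fEps ε) a)


namespace CuntzDimAux

lemma fEps_continuous (ε : ℝ) : Continuous (fEps ε) := by unfold fEps; fun_prop

lemma fEps_zero (ε : ℝ) : fEps ε 0 = 0 := by simp [fEps]

lemma fEps_nonneg {ε t : ℝ} (hε : 0 < ε) (ht : 0 ≤ t) : 0 ≤ fEps ε t :=
  le_min (by positivity) one_pos.le

lemma fEps_le_one {ε t : ℝ} : fEps ε t ≤ 1 := min_le_right _ _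

lemma fEps_mul_self {ε t : ℝ} (hε : 0 < ε) (ht : 0 ≤ t) :
    (max t ε)⁻¹ * t = fEps ε t := by
  rcases le_total t ε with h | h
  · rw [max_eq_right h, fEps, min_eq_left (by rw [div_le_one hε]; exact h)]
    rw [div_eq_inv_mul]
  · rw [max_eq_left h, fEps, min_eq_right (by rw [le_div_iff₀ hε]; linarith)]
    exact inv_mul_cancel₀ (by linarith : t ≠ 0)

lemma fEps_cut {ε t : ℝ} (hε : 0 < ε) (ht : 0 ≤ t) :
    t * (1 - fEps ε t) ≤ ε * fEps ε t := by
  rcases le_total t ε with h | h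
  · rw [fEps, min_eq_left (by rw [div_le_one hε]; exact h)]
    have h2 : ε * (t / ε) = t := by field_simp
    rw [h2]; nlinarith [div_nonneg ht hε.le]
  · rw [fEps, min_eq_right (by rw [le_div_iff₀ hε]; linarith)]
    simp; nlinarith

variable {A : Type*} [NonUnitalCStarAlgebra A] [PartialOrder A] [StarOrderedRing A]

lemma tw_mono {τ : A → ℝ≥0∞} (hτ : IsTracialWeight τ) {u v : A} (hu : 0 ≤ u) (h : u ≤ v) :
    τ u ≤ τ v := by
  have h1 : v = u + (v - u) := by abel
  rw [h1, hτ.additive u (v - u) hu (sub_nonneg.2 h)]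
  exact le_self_add

lemma smul_nonneg_of_nonneg {r : ℝ} (hr : 0 ≤ r) {x : A} (hx : 0 ≤ x) : 0 ≤ r • x := by
  rw [← cfcₙ_smul_id (R := ℝ) r x]
  exact cfcₙ_nonneg fun t ht => smul_nonneg hr (quasispectrum_nonneg_of_nonneg x hx t ht)

lemma key {τ : A → ℝ≥0∞} (hτ : IsTracialWeight τ) {b u : A} (hb : 0 ≤ b) (hu : 0 ≤ u)
    {K : ℝ} (hK : 0 ≤ K) (hub : u ≤ K • b) {δ : ℝ} (hδ : 0 < δ) :
    τ u ≤ ENNReal.ofReal (‖u‖ + K * δ) * τ (cfcₙ (fEps δ) b) := by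
  have hbsa : IsSelfAdjoint b := .of_nonneg hb
  have husa : IsSelfAdjoint u := .of_nonneg hu
  have σb := quasispectrum_nonneg_of_nonneg (𝕜 := ℝ) b hb
  have hfc : Continuous (fEps δ) := fEps_continuous δ
  have hf0 : fEps δ 0 = 0 := fEps_zero δ
  -- the functions
  have hqc : Continuous (fun t : ℝ => 1 - Real.sqrt (1 - fEps δ t)) := by fun_prop
  have hq0 : (fun t : ℝ => 1 - Real.sqrt (1 - fEps δ t)) 0 = 0 := by simp [fEps_zero]
  have hfhc : Continuous (fun t : ℝ => Real.sqrt (fEps δ t)) := by fun_prop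
  have hfh0 : (fun t : ℝ => Real.sqrt (fEps δ t)) 0 = 0 := by simp [fEps_zero]
  set f := cfcₙ (fEps δ) b with hf_def
  set e := cfcₙ (fun t : ℝ => 1 - Real.sqrt (1 - fEps δ t)) b with he_def
  set fh := cfcₙ (fun t : ℝ => Real.sqrt (fEps δ t)) b with hfh_def
  have hf_nonneg : 0 ≤ f := cfcₙ_nonneg fun t ht => fEps_nonneg hδ (σb t ht)
  have hfsa : IsSelfAdjoint f := .of_nonneg hf_nonneg
  have hesa : IsSelfAdjoint e := cfcₙ_predicate _ b
  have hfh_nonneg : 0 ≤ fh := cfcₙ_nonneg fun t ht => Real.sqrt_nonneg _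
  have hfhsa : IsSelfAdjoint fh := .of_nonneg hfh_nonneg
  have hfh2 : fh * fh = f := by
    rw [hfh_def, ← cfcₙ_mul _ _ b hfhc.continuousOn hfh0 hfhc.continuousOn hfh0]
    exact cfcₙ_congr fun t ht => Real.mul_self_sqrt (fEps_nonneg hδ (σb t ht))
  have hee : e + e - e * e = f := by
    rw [he_def, ← cfcₙ_mul _ _ b hqc.continuousOn hq0 hqc.continuousOn hq0,
      ← cfcₙ_add _ _ b hqc.continuousOn hq0 hqc.continuousOn hq0,
      ← cfcₙ_sub (fun x => (1 - √(1 - fEps δ x)) + (1 - √(1 - fEps δ x))) (fun x => (1 - √(1 - fEps δ x)) * (1 - √(1 - fEps δ x))) b (hqc.add hqc).continuousOn (by simpa using hq0)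
        (hqc.mul hqc).continuousOn (by simpa using hq0)]
    refine cfcₙ_congr fun t ht => ?_
    have h1 : 0 ≤ 1 - fEps δ t := by linarith [fEps_le_one (ε := δ) (t := t)]
    have h2 := Real.mul_self_sqrt h1
    linear_combination -h2
  set s := CFC.sqrt u with hs_def
  have hs_nonneg : 0 ≤ s := CFC.sqrt_nonneg _
  have hssa : IsSelfAdjoint s := .of_nonneg hs_nonneg
  have hss : s * s = u := CFC.sqrt_mul_sqrt_self u hu
  set z₂ := s - e * s with hz2_def
  have hz2star : star z₂ = s - s * e := by
    simp [hz2_def, star_sub, star_mul, hssa.star_eq, hesa.star_eq]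
  have hz2 : star z₂ * z₂ = u - s * f * s := by
    rw [hz2_def, hz2star, ← hss, ← hee]; noncomm_ring
  set m := s * f * s with hm_def
  have hm_nonneg : 0 ≤ m := by
    have := star_left_conjugate_nonneg hf_nonneg s
    rwa [hssa.star_eq] at this
  have hsplit : u = m + star z₂ * z₂ := by rw [hz2]; abel
  have hτsplit : τ u = τ m + τ (star z₂ * z₂) := by
    nth_rewrite 1 [hsplit]
    exact hτ.additive _ _ hm_nonneg (star_mul_self_nonneg z₂)
  -- Bound 1 : τ m ≤ ‖u‖ τ f
  set z₁ := fh * s with hz1_def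
  have hz1a : star z₁ * z₁ = m := by
    rw [hz1_def, star_mul, hssa.star_eq, hfhsa.star_eq, hm_def, ← hfh2]; noncomm_ring
  have hz1b : z₁ * star z₁ = fh * u * fh := by
    rw [hz1_def, star_mul, hssa.star_eq, hfhsa.star_eq, ← hss]; noncomm_ring
  have hbd1 : τ m ≤ ENNReal.ofReal ‖u‖ * τ f := by
    have h1 : τ m = τ (fh * u * fh) := by rw [← hz1a, hτ.tracial, hz1b]
    have h2 : fh * u * fh ≤ ‖u‖ • f := by
      have := CStarAlgebra.star_left_conjugate_le_norm_smul (a := fh) (b := u) husa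
      rwa [hfhsa.star_eq, hfh2] at this
    have h3 : 0 ≤ fh * u * fh := by
      have := star_left_conjugate_nonneg hu fh
      rwa [hfhsa.star_eq] at this
    rw [h1]
    exact (tw_mono hτ h3 h2).trans_eq (hτ.homogeneous f hf_nonneg ‖u‖ (norm_nonneg u))
  -- Bound 2 : τ (star z₂ * z₂) ≤ K δ τ f
  have hZ : z₂ * star z₂ = u - e * u - u * e + e * (u * e) := by
    rw [hz2_def, hz2star, ← hss]; noncomm_ring
  set D := K • b - u with hD_def
  have hD : 0 ≤ D := sub_nonneg.2 hub
  set d' := CFC.sqrt D with hd_def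
  have hd_nonneg : 0 ≤ d' := CFC.sqrt_nonneg _
  have hdsa : IsSelfAdjoint d' := .of_nonneg hd_nonneg
  have hdd : d' * d' = D := CFC.sqrt_mul_sqrt_self D hD
  set w₃ := d' - d' * e with hw3_def
  have hw3star : star w₃ = d' - e * d' := by
    simp [hw3_def, star_sub, star_mul, hdsa.star_eq, hesa.star_eq]
  have hw : star w₃ * w₃ = D - e * D - D * e + e * (D * e) := by
    rw [hw3_def, hw3star, ← hdd]; noncomm_ring
  set G := cfcₙ (fun t : ℝ => t * (1 - fEps δ t)) b with hG_def
  have hidc : Continuous (fun t : ℝ => t) := continuous_id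
  have hG : b - e * b - b * e + e * (b * e) = G := by
    have hb_id : b = cfcₙ (fun t : ℝ => t) b := (cfcₙ_id' ℝ b hbsa).symm
    rw [hG_def]
    nth_rewrite 1 [hb_id]; nth_rewrite 2 [hb_id]; nth_rewrite 3 [hb_id]; nth_rewrite 4 [hb_id]
    rw [he_def,
      ← cfcₙ_mul _ _ b hidc.continuousOn rfl hqc.continuousOn hq0,
      ← cfcₙ_mul (fun x => (1 - √(1 - fEps δ x))) (fun x => x * (1 - √(1 - fEps δ x))) b hqc.continuousOn hq0 (hidc.mul hqc).continuousOn (by simp [fEps_zero]),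
      ← cfcₙ_mul _ _ b hqc.continuousOn hq0 hidc.continuousOn rfl,
      ← cfcₙ_sub (fun x => x) (fun x => (1 - √(1 - fEps δ x)) * x) b hidc.continuousOn rfl (hqc.mul hidc).continuousOn (by simp [fEps_zero]),
      ← cfcₙ_sub (fun x => x - (1 - √(1 - fEps δ x)) * x) (fun x => x * (1 - √(1 - fEps δ x))) b (hidc.sub (hqc.mul hidc)).continuousOn (by simp [fEps_zero])
          (hidc.mul hqc).continuousOn (by simp [fEps_zero]),
      ← cfcₙ_add (fun x => x - (1 - √(1 - fEps δ x)) * x - x * (1 - √(1 - fEps δ x))) (fun x => (1 - √(1 - fEps δ x)) * (x * (1 - √(1 - fEps δ x)))) b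
          ((hidc.sub (hqc.mul hidc)).sub (hidc.mul hqc)).continuousOn (by simp [fEps_zero])
          (hqc.mul (hidc.mul hqc)).continuousOn (by simp [fEps_zero])]
    refine cfcₙ_congr fun t ht => ?_
    have h1 : 0 ≤ 1 - fEps δ t := by linarith [fEps_le_one (ε := δ) (t := t)]
    have h2 := Real.mul_self_sqrt h1
    linear_combination t * h2
  have hc : K • b = D + u := by rw [hD_def]; abel
  have hKG : K • G = star w₃ * w₃ + z₂ * star z₂ := by
    have h1 : K • G = K • b - e * (K • b) - (K • b) * e + e * ((K • b) * e) := by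
      rw [← hG]; simp only [smul_sub, smul_add, mul_smul_comm, smul_mul_assoc]
    rw [h1, hc, hw, hZ]; noncomm_ring
  have hZle : z₂ * star z₂ ≤ K • G := by
    rw [← sub_nonneg]
    have h2 : K • G - z₂ * star z₂ = star w₃ * w₃ := by rw [hKG]; abel
    rw [h2]; exact star_mul_self_nonneg w₃
  have hGle : G ≤ δ • f := by
    rw [hf_def, ← cfcₙ_smul δ (fEps δ) b hfc.continuousOn (by simp [fEps_zero])]
    exact cfcₙ_mono (fun t ht => by simpa using fEps_cut hδ (σb t ht))
      (hidc.mul (continuous_const.sub hfc)).continuousOn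
      (hfc.const_smul δ : Continuous (fun x => δ • fEps δ x)).continuousOn (by simp [fEps_zero]) (by simp [fEps_zero])
  have hbd2 : τ (star z₂ * z₂) ≤ ENNReal.ofReal (K * δ) * τ f := by
    have h1 : τ (star z₂ * z₂) = τ (z₂ * star z₂) := hτ.tracial z₂
    have h2 : z₂ * star z₂ ≤ (K * δ) • f := by
      refine hZle.trans ?_
      rw [← smul_smul]
      rw [← sub_nonneg, ← smul_sub]
      exact smul_nonneg_of_nonneg hK (sub_nonneg.2 hGle)
    rw [h1]
    exact (tw_mono hτ (mul_star_self_nonneg z₂) h2).trans_eq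
      (hτ.homogeneous f hf_nonneg (K * δ) (mul_nonneg hK hδ.le))
  calc τ u = τ m + τ (star z₂ * z₂) := hτsplit
    _ ≤ ENNReal.ofReal ‖u‖ * τ f + ENNReal.ofReal (K * δ) * τ f := add_le_add hbd1 hbd2
    _ = ENNReal.ofReal (‖u‖ + K * δ) * τ f := by
        rw [ENNReal.ofReal_add (norm_nonneg u) (mul_nonneg hK hδ.le), add_mul]

lemma key2 {τ : A → ℝ≥0∞} (hτ : IsTracialWeight τ) {b : A} (hb : 0 ≤ b) (y : A)
    (d : ℝ≥0∞) (hd : ∀ δ : ℝ, 0 < δ → τ (cfcₙ (fEps δ) b) ≤ d) (hdT : d ≠ ⊤) :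
    τ (star y * b * y) ≤ ENNReal.ofReal ‖star y * b * y‖ * d := by
  set s' := CFC.sqrt b with hs'_def
  have hs'_nonneg : 0 ≤ s' := CFC.sqrt_nonneg _
  have hs'sa : IsSelfAdjoint s' := .of_nonneg hs'_nonneg
  have hs'' : s' * s' = b := CFC.sqrt_mul_sqrt_self b hb
  set z := s' * y with hz_def
  have hv : star y * b * y = star z * z := by
    rw [hz_def, star_mul, hs'sa.star_eq, ← hs'']; noncomm_ring
  set u := z * star z with hu_def
  have hu : 0 ≤ u := mul_star_self_nonneg z
  have hτu : τ (star y * b * y) = τ u := by rw [hv, hτ.tracial]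
  have hnorm : ‖u‖ = ‖star y * b * y‖ := by
    rw [hv, hu_def, CStarRing.norm_self_mul_star, CStarRing.norm_star_mul_self]
  have huK : u ≤ ‖y * star y‖ • b := by
    have h1 : u = s' * (y * star y) * s' := by
      rw [hu_def, hz_def, star_mul, hs'sa.star_eq]; noncomm_ring
    have h2 := CStarAlgebra.star_left_conjugate_le_norm_smul (a := s') (b := y * star y)
      (IsSelfAdjoint.of_nonneg (mul_star_self_nonneg y))
    rwa [hs'sa.star_eq, ← h1, hs''] at h2
  have hstep : ∀ δ : ℝ, 0 < δ →
      τ u ≤ ENNReal.ofReal (‖u‖ + ‖y * star y‖ * δ) * d := fun δ hδ =>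
    (key hτ hb hu (norm_nonneg _) huK hδ).trans (mul_le_mul_right (hd δ hδ) _)
  have hlim : Tendsto (fun δ : ℝ => ENNReal.ofReal (‖u‖ + ‖y * star y‖ * δ) * d)
      (𝓝[>] (0:ℝ)) (𝓝 (ENNReal.ofReal ‖u‖ * d)) := by
    have h1 : Tendsto (fun δ : ℝ => ‖u‖ + ‖y * star y‖ * δ) (𝓝[>] (0:ℝ)) (𝓝 ‖u‖) := by
      have h2 : Tendsto (fun δ : ℝ => ‖u‖ + ‖y * star y‖ * δ) (𝓝 (0:ℝ))
          (𝓝 (‖u‖ + ‖y * star y‖ * 0)) :=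
        (continuous_const.add (continuous_const.mul continuous_id)).tendsto 0
      simpa using h2.mono_left nhdsWithin_le_nhds
    exact ENNReal.Tendsto.mul_const (ENNReal.tendsto_ofReal h1) (Or.inr hdT)
  have hfin : τ u ≤ ENNReal.ofReal ‖u‖ * d :=
    ge_of_tendsto hlim (eventually_nhdsWithin_of_forall hstep)
  rw [hτu, ← hnorm]
  exact hfin


lemma eps_bound {τ : A → ℝ≥0∞} (hτ : IsTracialWeight τ) {a b : A} (ha : 0 ≤ a) (hb : 0 ≤ b)
    (hab : CuntzLe a b) {ε : ℝ} (hε : 0 < ε) (hdT : dimFn τ b ≠ ⊤) :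
    τ (cfcₙ (fEps ε) a) ≤ dimFn τ b := by
  obtain ⟨x, hx⟩ := hab
  set d := dimFn τ b with hd_def
  have hd : ∀ δ : ℝ, 0 < δ → τ (cfcₙ (fEps δ) b) ≤ d := fun δ hδ =>
    le_iSup₂ (f := fun (δ : ℝ) (_ : 0 < δ) => τ (cfcₙ (fEps δ) b)) δ hδ
  have hasa : IsSelfAdjoint a := .of_nonneg ha
  have σa := quasispectrum_nonneg_of_nonneg (𝕜 := ℝ) a ha
  -- the function g
  have hmaxpos : ∀ t : ℝ, (0:ℝ) < max t ε := fun t => lt_max_of_lt_right hε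
  have hgc : Continuous (fun t : ℝ => 1 - Real.sqrt (ε * (max t ε)⁻¹)) := by
    refine continuous_const.sub (Real.continuous_sqrt.comp (continuous_const.mul ?_))
    exact (continuous_id.max continuous_const).inv₀ fun t => (hmaxpos t).ne'
  have hg0 : (fun t : ℝ => 1 - Real.sqrt (ε * (max t ε)⁻¹)) 0 = 0 := by
    simp [max_eq_right hε.le, mul_inv_cancel₀ hε.ne']
  set g : ℝ → ℝ := fun t : ℝ => 1 - Real.sqrt (ε * (max t ε)⁻¹) with hg_def
  set gg := cfcₙ g a with hgg_def
  have hggsa : IsSelfAdjoint gg := cfcₙ_predicate _ a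
  set L := cfcₙ (fEps ε) a with hL_def
  have hL0 : 0 ≤ L := cfcₙ_nonneg fun t ht => fEps_nonneg hε (σa t ht)
  have hLsa : IsSelfAdjoint L := .of_nonneg hL0
  have hLnorm : ‖L‖ ≤ 1 := norm_cfcₙ_le fun t ht => by
    rw [Real.norm_eq_abs, abs_of_nonneg (fEps_nonneg hε (σa t ht))]
    exact fEps_le_one
  -- the image of a under the quadratic map
  have hFa : a - gg * a - a * gg + gg * (a * gg) = ε • L := by
    have hidc : Continuous (fun t : ℝ => t) := continuous_id
    have e1 : cfcₙ (fun t : ℝ => g t * t) a = gg * a := by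
      rw [cfcₙ_mul _ _ a hgc.continuousOn hg0 hidc.continuousOn rfl, cfcₙ_id' ℝ a]
    have e2 : cfcₙ (fun t : ℝ => t * g t) a = a * gg := by
      rw [cfcₙ_mul _ _ a hidc.continuousOn rfl hgc.continuousOn hg0, cfcₙ_id' ℝ a]
    have e3 : cfcₙ (fun t : ℝ => g t * (t * g t)) a = gg * (a * gg) := by
      rw [cfcₙ_mul g (fun t => t * g t) a hgc.continuousOn hg0 (hidc.mul hgc).continuousOn (by simp [hg0]), e2]
    have e4 : cfcₙ (fun t : ℝ => t - g t * t - t * g t + g t * (t * g t)) a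
        = a - gg * a - a * gg + gg * (a * gg) := by
      rw [cfcₙ_add (fun t => t - g t * t - t * g t) (fun t => g t * (t * g t)) a ((hidc.sub (hgc.mul hidc)).sub (hidc.mul hgc)).continuousOn
            (by simp [hg0]) (hgc.mul (hidc.mul hgc)).continuousOn (by simp [hg0]),
        cfcₙ_sub (fun t => t - g t * t) (fun t => t * g t) a (hidc.sub (hgc.mul hidc)).continuousOn (by simp [hg0])
            (hidc.mul hgc).continuousOn (by simp [hg0]),
        cfcₙ_sub (fun t => t) (fun t => g t * t) a hidc.continuousOn rfl (hgc.mul hidc).continuousOn (by simp [hg0]),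
        e1, e2, e3, cfcₙ_id' ℝ a]
    rw [← e4, hL_def, ← cfcₙ_smul ε (fEps ε) a (fEps_continuous ε).continuousOn (fEps_zero ε)]
    refine cfcₙ_congr fun t ht => ?_
    have ht0 := σa t ht
    have h1 : 0 ≤ ε * (max t ε)⁻¹ := by positivity
    have h2 := Real.mul_self_sqrt h1
    have h3 := fEps_mul_self hε ht0
    show t - g t * t - t * g t + g t * (t * g t) = ε • fEps ε t
    rw [smul_eq_mul, ← h3, hg_def]
    linear_combination t * h2
  -- the approximating sequence
  set c := fun n => star (x n) * b * x n with hc_def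
  set y := fun n => x n - x n * gg with hy_def
  set v := fun n => star (y n) * b * y n with hv_def
  have hvc : ∀ n, v n = c n - gg * c n - c n * gg + gg * (c n * gg) := by
    intro n
    simp only [hv_def, hy_def, hc_def, star_sub, star_mul, hggsa.star_eq]
    noncomm_ring
  have hca : Tendsto c atTop (𝓝 a) := tendsto_iff_norm_sub_tendsto_zero.2 hx
  have hFc : Continuous (fun w : A => w - gg * w - w * gg + gg * (w * gg)) := by
    refine ((continuous_id.sub (continuous_const.mul continuous_id)).sub
      (continuous_id.mul continuous_const)).add
      (continuous_const.mul (continuous_id.mul continuous_const))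
  have hvL : Tendsto v atTop (𝓝 (ε • L)) := by
    rw [← hFa]
    have h1 := (hFc.tendsto a).comp hca
    convert h1 using 1
    funext n
    exact hvc n
  have hv0 : ∀ n, 0 ≤ v n := fun n => star_left_conjugate_nonneg hb (y n)
  have hbn : ∀ n, τ (v n) ≤ ENNReal.ofReal ‖v n‖ * d := fun n => key2 hτ hb (y n) d hd hdT
  -- ε-level bound with slack η
  have hmain : ∀ η : ℝ, 0 < η → τ L ≤ ENNReal.ofReal (1 + η) * d := by
    intro η hη
    have hεL : ‖ε • L‖ < ε * (1 + η) := by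
      rw [norm_smul, Real.norm_eq_abs, abs_of_pos hε]
      calc ε * ‖L‖ ≤ ε * 1 := by nlinarith
        _ < ε * (1 + η) := by nlinarith
    have hev : ∀ᶠ n in atTop, ‖v n‖ < ε * (1 + η) :=
      Tendsto.eventually_lt_const hεL hvL.norm
    have hscale : ENNReal.ofReal ε * τ L ≤ ENNReal.ofReal ε * (ENNReal.ofReal (1 + η) * d) := by
      have hτεL : τ (ε • L) = ENNReal.ofReal ε * τ L := hτ.homogeneous L hL0 ε hε.le
      rw [← hτεL]
      refine le_of_forall_lt fun r hr => ?_
      have hev2 : ∀ᶠ n in atTop, r < τ (v n) := by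
        have hlsc := hτ.lowerSemicontinuous (ε • L) (smul_nonneg_of_nonneg hε.le hL0) r hr
        have hvLS : Tendsto v atTop (𝓝[{w : A | 0 ≤ w}] (ε • L)) :=
          tendsto_nhdsWithin_of_tendsto_nhds_of_eventually_within v hvL
            (Eventually.of_forall hv0)
        exact hvLS.eventually hlsc
      obtain ⟨n, h1, h2⟩ := (hev.and hev2).exists
      calc r < τ (v n) := h2
        _ ≤ ENNReal.ofReal ‖v n‖ * d := hbn n
        _ ≤ ENNReal.ofReal (ε * (1 + η)) * d :=
            mul_le_mul_left (ENNReal.ofReal_le_ofReal h1.le) d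
        _ = ENNReal.ofReal ε * (ENNReal.ofReal (1 + η) * d) := by
            rw [ENNReal.ofReal_mul hε.le, mul_assoc]
    exact (ENNReal.mul_le_mul_iff_right (by simpa using hε) ENNReal.ofReal_ne_top).mp hscale
  -- let η → 0
  have hlim : Tendsto (fun η : ℝ => ENNReal.ofReal (1 + η) * d) (𝓝[>] (0:ℝ))
      (𝓝 (ENNReal.ofReal 1 * d)) := by
    have h1 : Tendsto (fun η : ℝ => (1:ℝ) + η) (𝓝 (0:ℝ)) (𝓝 (1 + 0)) :=
      (continuous_const.add continuous_id).tendsto 0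
    have h2 : Tendsto (fun η : ℝ => (1:ℝ) + η) (𝓝[>] (0:ℝ)) (𝓝 (1:ℝ)) := by
      simpa using h1.mono_left nhdsWithin_le_nhds
    exact ENNReal.Tendsto.mul_const (ENNReal.tendsto_ofReal h2) (Or.inr hdT)
  have := ge_of_tendsto hlim (eventually_nhdsWithin_of_forall hmain)
  simpa using this

end CuntzDimAux

/-- Cuntz subequivalence implies `d_τ(a) ≤ d_τ(b)` for every lower
semicontinuous tracial weight `τ`; consequently Cuntz equivalence implies
`d_τ(a) = d_τ(b)`. -/
theorem cuntzLe_implies_dimFn_le (a b : A) (ha : 0 ≤ a) (hb : 0 ≤ b) :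
    (CuntzLe a b → ∀ τ : A → ℝ≥0∞, IsTracialWeight τ → dimFn τ a ≤ dimFn τ b) ∧
    (CuntzEquiv a b → ∀ τ : A → ℝ≥0∞, IsTracialWeight τ → dimFn τ a = dimFn τ b) := by
  have main : ∀ (p q : A), 0 ≤ p → 0 ≤ q → CuntzLe p q →
      ∀ τ : A → ℝ≥0∞, IsTracialWeight τ → dimFn τ p ≤ dimFn τ q := by
    intro p q hp hq hpq τ hτ
    by_cases hdT : dimFn τ q = ⊤
    · rw [hdT]; exact le_top
    · refine iSup₂_le fun ε hε => CuntzDimAux.eps_bound hτ hp hq hpq hε hdT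
  exact ⟨fun h τ hτ => main a b ha hb h τ hτ,
    fun h τ hτ => le_antisymm (main a b ha hb h.1 τ hτ) (main b a hb ha h.2 τ hτ)⟩
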